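/- (Lemma 2.1(v), second part) Given two admissible 1D primitive states U⁻ and U⁺ with the HLLC wave speeds s⁻ = min(s_min(U⁻), s_min(U⁺)) and s⁺ = max(s_max(U⁻), s_max(U⁺)), if s* ∈ (-1,1) satisfies the contact-discontinuity relation (1 - s⁺s*)(s*A⁻ - B⁻) = (1 - s⁻s*)(s*A⁺ - B⁺), then s⁻ < s* < s⁺. -/

import Mathlib

set_option maxHeartbeats 1000000

noncomputable section

namespace SRHD1D

/-- Lorentz factor `γ = (1 - u²)^(-1/2)`. -/
def lorentz (u : ℝ) : ℝ := 1 / Real.sqrt (1 - u ^ 2)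

/-- Specific enthalpy `h = 1 + Γ p / ((Γ - 1) ρ)` of a perfect gas. -/
def enthalpy (G r p : ℝ) : ℝ := 1 + G * p / ((G - 1) * r)

/-- Sound speed `c_s = √(Γ p / (ρ h))`. -/
def soundSpeed (G r p : ℝ) : ℝ := Real.sqrt (G * p / (r * enthalpy G r p))

/-- Conserved rest-mass density `D = ρ γ`. -/
def Dc (r u : ℝ) : ℝ := r * lorentz u

/-- Conserved momentum `m = ρ h γ² u`. -/
def mc (G r u p : ℝ) : ℝ := r * enthalpy G r p * lorentz u ^ 2 * u

/-- Conserved total energy `E = ρ h γ² - p`. -/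
def Ec (G r u p : ℝ) : ℝ := r * enthalpy G r p * lorentz u ^ 2 - p

/-- Minimum characteristic speed `s_min = (u - c_s)/(1 - c_s u)`. -/
def sMin (G r u p : ℝ) : ℝ := (u - soundSpeed G r p) / (1 - soundSpeed G r p * u)

/-- Maximum characteristic speed `s_max = (u + c_s)/(1 + c_s u)`. -/
def sMax (G r u p : ℝ) : ℝ := (u + soundSpeed G r p) / (1 + soundSpeed G r p * u)

/-- Collected facts about a single admissible state. -/
lemma state_facts (G r u p : ℝ)
    (hG1 : 1 < G) (hG2 : G ≤ 2) (hr : 0 < r) (hu : |u| < 1) (hp : 0 < p) :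
    (-1 < sMin G r u p ∧ sMin G r u p < u) ∧ (u < sMax G r u p ∧ sMax G r u p < 1) ∧
    0 < r * enthalpy G r p * lorentz u ^ 2 ∧
    (∀ sp, sMax G r u p ≤ sp → p < r * enthalpy G r p * lorentz u ^ 2 * (sp - u)) ∧
    (∀ sm, sm ≤ sMin G r u p → p < r * enthalpy G r p * lorentz u ^ 2 * (u - sm)) ∧
    (∀ sm sp, -1 < sm → sm ≤ sMin G r u p → sMax G r u p ≤ sp → sp < 1 →
      p * (1 - sm * sp) < r * enthalpy G r p * lorentz u ^ 2 * (u - sm) * (sp - u)) := by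
  obtain ⟨hu1, hu2⟩ := abs_lt.mp hu
  have hG0 : 0 < G - 1 := by linarith
  have hv : 0 < 1 - u ^ 2 := by nlinarith
  have hγ2 : lorentz u ^ 2 = 1 / (1 - u ^ 2) := by
    rw [lorentz, div_pow, one_pow, Real.sq_sqrt hv.le]
  set h := enthalpy G r p with hh_def
  have hh1 : 1 < h := by
    rw [hh_def, enthalpy]
    have : 0 < G * p / ((G - 1) * r) := by positivity
    linarith
  have hrh : 0 < r * h := by positivity
  set c := soundSpeed G r p with hc_def
  have harg : 0 < G * p / (r * h) := by positivity
  have hc0 : 0 < c := Real.sqrt_pos.mpr harg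
  have hc2 : c ^ 2 = G * p / (r * h) := Real.sq_sqrt harg.le
  have hc2' : c ^ 2 * (r * h) = G * p := by
    rw [hc2]; field_simp
  have hrh_eq : (G - 1) * (r * h) = (G - 1) * r + G * p := by
    rw [hh_def, enthalpy]; field_simp
  have hcG : c ^ 2 < G - 1 := by
    have h1 : c ^ 2 * (r * h) < (G - 1) * (r * h) := by
      rw [hc2', hrh_eq]; nlinarith
    exact lt_of_mul_lt_mul_right h1 hrh.le
  have hc1 : c < 1 := by nlinarith
  have hcu1 : 0 < 1 - c * u := by nlinarith [mul_pos hc0 (show (0:ℝ) < 1 - u by linarith)]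
  have hcu2 : 0 < 1 + c * u := by nlinarith [mul_pos hc0 (show (0:ℝ) < 1 + u by linarith)]
  have hsmin : sMin G r u p = (u - c) / (1 - c * u) := rfl
  have hsmax : sMax G r u p = (u + c) / (1 + c * u) := rfl
  set W := r * h * lorentz u ^ 2 with hW_def
  have hWv : W * (1 - u ^ 2) = r * h := by
    rw [hW_def, hγ2]; field_simp
  have hW0 : 0 < W := by rw [hW_def, hγ2]; positivity
  -- wave-speed position
  have hsminlt : sMin G r u p < u := by
    rw [hsmin, div_lt_iff₀ hcu1]; nlinarith [mul_pos hc0 hv]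
  have hsmingt : -1 < sMin G r u p := by
    rw [hsmin, lt_div_iff₀ hcu1]
    nlinarith [mul_pos (show (0:ℝ) < 1 + u by linarith) (show (0:ℝ) < 1 - c by linarith)]
  have hsmaxgt : u < sMax G r u p := by
    rw [hsmax, lt_div_iff₀ hcu2]; nlinarith [mul_pos hc0 hv]
  have hsmaxlt : sMax G r u p < 1 := by
    rw [hsmax, div_lt_iff₀ hcu2]
    nlinarith [mul_pos (show (0:ℝ) < 1 - u by linarith) (show (0:ℝ) < 1 - c by linarith)]
  -- key products
  have I1 : W * (sMax G r u p - u) * ((1 + c * u) * c) = G * p := by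
    have e : W * (sMax G r u p - u) * ((1 + c * u) * c) = c ^ 2 * (W * (1 - u ^ 2)) := by
      rw [hsmax]; field_simp [show 1 + u * c ≠ 0 by rw [mul_comm]; exact hcu2.ne']; ring
    rw [e, hWv, hc2']
  have I2 : W * (u - sMin G r u p) * ((1 - c * u) * c) = G * p := by
    have e : W * (u - sMin G r u p) * ((1 - c * u) * c) = c ^ 2 * (W * (1 - u ^ 2)) := by
      rw [hsmin]; field_simp [show 1 - u * c ≠ 0 by rw [mul_comm]; exact hcu1.ne']; ring
    rw [e, hWv, hc2']
  have hdmax : (1 + c * u) * c < G := by nlinarith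
  have hdmin : (1 - c * u) * c < G := by nlinarith
  have Emax : p < W * (sMax G r u p - u) := by
    have h5 : p * ((1 + c * u) * c) < G * p := by nlinarith
    rw [← I1] at h5
    exact lt_of_mul_lt_mul_right h5 (by positivity)
  have Emin : p < W * (u - sMin G r u p) := by
    have h5 : p * ((1 - c * u) * c) < G * p := by nlinarith
    rw [← I2] at h5
    exact lt_of_mul_lt_mul_right h5 (by positivity)
  have Esp : ∀ sp, sMax G r u p ≤ sp → p < W * (sp - u) := by
    intro sp hsp
    linarith [mul_nonneg hW0.le (sub_nonneg.mpr hsp), Emax]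
  have Esm : ∀ sm, sm ≤ sMin G r u p → p < W * (u - sm) := by
    intro sm hsm
    linarith [mul_nonneg hW0.le (sub_nonneg.mpr hsm), Emin]
  refine ⟨⟨hsmingt, hsminlt⟩, ⟨hsmaxgt, hsmaxlt⟩, hW0, Esp, Esm, ?_⟩
  intro sm sp hsm1 hsm2 hsp1 hsp2
  -- base case at the extreme wave speeds
  have I3 : W * (u - sMin G r u p) * (sMax G r u p - u) * ((1 - c * u) * (1 + c * u)) =
      G * p * (1 - u ^ 2) := by
    have e : W * (u - sMin G r u p) * (sMax G r u p - u) * ((1 - c * u) * (1 + c * u)) =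
        (c ^ 2 * (r * h)) * ((1 - u ^ 2) * (W * (1 - u ^ 2)) / (r * h)) := by
      rw [hsmin, hsmax]; field_simp [show 1 - u * c ≠ 0 by rw [mul_comm]; exact hcu1.ne', show 1 + u * c ≠ 0 by rw [mul_comm]; exact hcu2.ne', hr.ne', (show h ≠ 0 by linarith)]; ring
    rw [e, hc2', hWv]
    field_simp
  have I4 : (1 - sMin G r u p * sMax G r u p) * ((1 - c * u) * (1 + c * u)) =
      (1 - u ^ 2) * (1 + c ^ 2) := by
    rw [hsmin, hsmax]; field_simp [show 1 - u * c ≠ 0 by rw [mul_comm]; exact hcu1.ne', show 1 + u * c ≠ 0 by rw [mul_comm]; exact hcu2.ne']; ring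
  have hD : 0 < (1 - c * u) * (1 + c * u) := mul_pos hcu1 hcu2
  have base : p * (1 - sMin G r u p * sMax G r u p) <
      W * (u - sMin G r u p) * (sMax G r u p - u) := by
    have h6 : p * (1 - sMin G r u p * sMax G r u p) * ((1 - c * u) * (1 + c * u)) <
        W * (u - sMin G r u p) * (sMax G r u p - u) * ((1 - c * u) * (1 + c * u)) := by
      rw [I3]
      calc p * (1 - sMin G r u p * sMax G r u p) * ((1 - c * u) * (1 + c * u))
          = p * ((1 - u ^ 2) * (1 + c ^ 2)) := by rw [mul_assoc, I4]
        _ < G * p * (1 - u ^ 2) := by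
            nlinarith [mul_pos (mul_pos hp hv) (show (0:ℝ) < G - 1 - c ^ 2 by linarith)]
    exact lt_of_mul_lt_mul_right h6 hD.le
  have t1 : 0 ≤ (sMin G r u p - sm) * (W * (sp - u) - p * sp) := by
    apply mul_nonneg (by linarith)
    linarith [Esp sp hsp1, mul_pos hp (show (0:ℝ) < 1 - sp by linarith)]
  have t2 : 0 ≤ (sp - sMax G r u p) * (W * (u - sMin G r u p) + p * sMin G r u p) := by
    apply mul_nonneg (by linarith)
    linarith [Emin, mul_pos hp (show (0:ℝ) < 1 + sMin G r u p by linarith)]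
  linarith [base, t1, t2]

theorem hllc_contact_speed_bounds (G r1 u1 p1 r2 u2 p2 sm sp A1 A2 B1 B2 sstar : ℝ)
    (hG1 : 1 < G) (hG2 : G ≤ 2)
    (hr1 : 0 < r1) (hu1 : |u1| < 1) (hp1 : 0 < p1)
    (hr2 : 0 < r2) (hu2 : |u2| < 1) (hp2 : 0 < p2)
    (hsm : sm = min (sMin G r1 u1 p1) (sMin G r2 u2 p2))
    (hsp : sp = max (sMax G r1 u1 p1) (sMax G r2 u2 p2))
    (hA1 : A1 = sm * Ec G r1 u1 p1 - mc G r1 u1 p1)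
    (hA2 : A2 = sp * Ec G r2 u2 p2 - mc G r2 u2 p2)
    (hB1 : B1 = mc G r1 u1 p1 * (sm - u1) - p1)
    (hB2 : B2 = mc G r2 u2 p2 * (sp - u2) - p2)
    (hs1 : -1 < sstar) (hs2 : sstar < 1)
    (hrel : (1 - sp * sstar) * (sstar * A1 - B1) = (1 - sm * sstar) * (sstar * A2 - B2))
    :
    sm < sstar ∧ sstar < sp := by
  obtain ⟨⟨F1a, F1b⟩, ⟨F1c, F1d⟩, F1W, F1e, F1f, F1g⟩ :=
    state_facts G r1 u1 p1 hG1 hG2 hr1 hu1 hp1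
  obtain ⟨⟨F2a, F2b⟩, ⟨F2c, F2d⟩, F2W, F2e, F2f, F2g⟩ :=
    state_facts G r2 u2 p2 hG1 hG2 hr2 hu2 hp2
  obtain ⟨hu1a, hu1b⟩ := abs_lt.mp hu1
  obtain ⟨hu2a, hu2b⟩ := abs_lt.mp hu2
  set W1 := r1 * enthalpy G r1 p1 * lorentz u1 ^ 2 with hW1_def
  set W2 := r2 * enthalpy G r2 p2 * lorentz u2 ^ 2 with hW2_def
  have hsm1 : sm ≤ sMin G r1 u1 p1 := hsm ▸ min_le_left _ _
  have hsm2 : sm ≤ sMin G r2 u2 p2 := hsm ▸ min_le_right _ _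
  have hsp1 : sMax G r1 u1 p1 ≤ sp := hsp ▸ le_max_left _ _
  have hsp2 : sMax G r2 u2 p2 ≤ sp := hsp ▸ le_max_right _ _
  have hsmgt : -1 < sm := by rw [hsm]; exact lt_min F1a F2a
  have hsplt : sp < 1 := by rw [hsp]; exact max_lt F1d F2d
  have hsmlt : sm < 1 := by linarith [lt_of_le_of_lt hsm1 F1b]
  have hspgt : -1 < sp := by linarith [lt_of_lt_of_le F2c hsp2]
  have hg1 : sstar * A1 - B1 = W1 * (sstar - u1) * (sm - u1) + p1 * (1 - sm * sstar) := by
    rw [hA1, hB1, Ec, mc, ← hW1_def]; ring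
  have hg2 : sstar * A2 - B2 = W2 * (sstar - u2) * (sp - u2) + p2 * (1 - sp * sstar) := by
    rw [hA2, hB2, Ec, mc, ← hW2_def]; ring
  have d1 : 0 < 1 - sp * sstar := by
    nlinarith [mul_pos (show (0:ℝ) < 1 - sp by linarith) (show (0:ℝ) < 1 + sstar by linarith),
      mul_pos (show (0:ℝ) < 1 + sp by linarith) (show (0:ℝ) < 1 - sstar by linarith)]
  have d2 : 0 < 1 - sm * sstar := by
    nlinarith [mul_pos (show (0:ℝ) < 1 - sm by linarith) (show (0:ℝ) < 1 + sstar by linarith),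
      mul_pos (show (0:ℝ) < 1 + sm by linarith) (show (0:ℝ) < 1 - sstar by linarith)]
  constructor
  · by_contra hcon
    push_neg at hcon  -- sstar ≤ sm
    have hposA : 0 < sstar * A1 - B1 := by
      rw [hg1]
      have h7 : 0 < u1 - sm := by linarith [lt_of_le_of_lt hsm1 F1b]
      have h8 : 0 < u1 - sstar := by linarith
      linarith [mul_pos (mul_pos F1W h8) h7, mul_pos hp1 d2]
    have box2 := F2g sm sp hsmgt hsm2 hsp2 hsplt
    have slope2 := F2e sp hsp2
    have t : 0 ≤ (sm - sstar) * (W2 * (sp - u2) - p2 * sp) := by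
      apply mul_nonneg (by linarith)
      linarith [slope2, mul_pos hp2 (show (0:ℝ) < 1 - sp by linarith)]
    have hnegA : sstar * A2 - B2 < 0 := by
      rw [hg2]
      linarith [box2, t]
    linarith [mul_pos d1 hposA, mul_neg_of_pos_of_neg d2 hnegA, hrel]
  · by_contra hcon
    push_neg at hcon  -- sp ≤ sstar
    have hposA : 0 < sstar * A2 - B2 := by
      rw [hg2]
      have h7 : 0 < sp - u2 := by linarith [lt_of_lt_of_le F2c hsp2]
      have h8 : 0 < sstar - u2 := by linarith
      linarith [mul_pos (mul_pos F2W h8) h7, mul_pos hp2 d1]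
    have box1 := F1g sm sp hsmgt hsm1 hsp1 hsplt
    have slope1 := F1f sm hsm1
    have t : 0 ≤ (sstar - sp) * (W1 * (u1 - sm) + p1 * sm) := by
      apply mul_nonneg (by linarith)
      linarith [slope1, mul_pos hp1 (show (0:ℝ) < 1 + sm by linarith)]
    have hnegA : sstar * A1 - B1 < 0 := by
      rw [hg1]
      linarith [box1, t]
    linarith [mul_pos d2 hposA, mul_neg_of_pos_of_neg d1 hnegA, hrel]

end SRHD1D
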